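/- For the 4-link switch with the 6 pair-types of K_4 and all p_j = q_i = 1, the rate vector λ = (0.3, 0.3, 0.3, 0.2, 0.45, 0.2) cannot be written as ∑_σ c_σ σ with c_σ ≥ 0, ∑_σ c_σ < 1, where σ ranges over {0,1}^6 vectors respecting the per-link constraint; indeed any nonnegative combination representing λ has coefficient sum at least 1.05 (in particular λ ∉ Λ_Q even though λ ∈ Λ). -/

import Mathlib

/-- The 6 pair-types of the 4-link switch, as edges of K_4 (0-indexed links). -/
def L6 : Fin 6 → Finset (Fin 4) :=
  ![{0, 1}, {0, 2}, {0, 3}, {1, 2}, {1, 3}, {2, 3}]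

/-- The arrival rate vector λ = (0.3, 0.3, 0.3, 0.2, 0.45, 0.2). -/
noncomputable def lam6 : Fin 6 → ℝ := ![0.3, 0.3, 0.3, 0.2, 0.45, 0.2]

/-- With all `p_j = q_i = 1`, any nonnegative combination of feasible service
vectors (partial matchings of K_4) representing λ = (0.3,0.3,0.3,0.2,0.45,0.2)
has coefficient sum at least 1.05 > 1; in particular no representation with
coefficient sum < 1 exists, so λ ∉ Λ_Q. -/
theorem stmt5 (S : Finset (Fin 6 → ℕ)) (c : (Fin 6 → ℕ) → ℝ)
    (hS : ∀ σ ∈ S, (∀ i, σ i ≤ 1) ∧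
      ∀ r : Fin 4, ∑ i ∈ Finset.univ.filter (fun i => r ∈ L6 i), σ i ≤ 1)
    (hc : ∀ σ, 0 ≤ c σ)
    (hrep : ∀ i : Fin 6, lam6 i = ∑ σ ∈ S, c σ * (σ i : ℝ)) :
    (1.05 : ℝ) ≤ ∑ σ ∈ S, c σ ∧ ¬ (∑ σ ∈ S, c σ < 1) := by
  have key : ∀ σ ∈ S, ((σ 0 : ℝ) + σ 2 + σ 4) ≤ 1 := by
    intro σ hσ
    obtain ⟨h1, h2⟩ := hS σ hσ
    have h0 := h2 0
    have ha := h2 1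
    have hb := h2 3
    simp only [Finset.sum_filter, Fin.sum_univ_six] at h0 ha hb
    simp [L6, Finset.mem_insert] at h0 ha hb
    have : σ 0 + σ 2 + σ 4 ≤ 1 := by omega
    exact_mod_cast this
  have hmain : (1.05 : ℝ) ≤ ∑ σ ∈ S, c σ := by
    have h1 : (1.05 : ℝ) = lam6 0 + lam6 2 + lam6 4 := by
      show (1.05 : ℝ) = 0.3 + 0.3 + 0.45
      norm_num
    rw [h1, hrep 0, hrep 2, hrep 4, ← Finset.sum_add_distrib, ← Finset.sum_add_distrib]
    apply Finset.sum_le_sum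
    intro σ hσ
    have := key σ hσ
    nlinarith [hc σ]
  exact ⟨hmain, by linarith⟩
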